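/- arXiv:math/9903106 — 2 statements merged into one kernel-verified Lean document; each statement's English description precedes it below -/
import Mathlib

section
/- If H and K are two distinct subgroups of the alternating group A₆, each isomorphic to A₅, and H and K are conjugate in A₆, then the intersection H ∩ K is isomorphic to the alternating group A₄ (in particular it has order 12). -/
open Equiv Equiv.Perm Subgroup

/-- `Equiv.permCongr` as a `MulEquiv`. -/
private def permCongrMulEquiv {α β : Type*} (e : α ≃ β) : Perm α ≃* Perm β where
  toEquiv := e.permCongr
  map_mul' p q := by
    ext x
    simp [Equiv.permCongr_apply, Equiv.Perm.mul_apply]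

private lemma natCard_alt5 : Nat.card ↥(alternatingGroup (Fin 5)) = 60 := by
  rw [Nat.card_eq_fintype_card]
  have h := two_mul_card_alternatingGroup (α := Fin 5)
  rw [Fintype.card_perm, Fintype.card_fin, show Nat.factorial 5 = 120 from rfl] at h
  omega

private lemma natCard_alt6 : Nat.card ↥(alternatingGroup (Fin 6)) = 360 := by
  rw [Nat.card_eq_fintype_card]
  have h := two_mul_card_alternatingGroup (α := Fin 6)
  rw [Fintype.card_perm, Fintype.card_fin, show Nat.factorial 6 = 720 from rfl] at h
  omega

/-- Any subgroup of `Perm (Fin 5)` of order `60` is the alternating group. -/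
private lemma subgroup_card_60 (M : Subgroup (Perm (Fin 5))) (hM : Nat.card ↥M = 60) :
    M = alternatingGroup (Fin 5) := by
  have hPcard : Nat.card (Perm (Fin 5)) = 120 := by
    rw [Nat.card_eq_fintype_card, Fintype.card_perm, Fintype.card_fin]
    rfl
  have hmi := Subgroup.card_mul_index M
  rw [hM, hPcard] at hmi
  have hidx : M.index = 2 := by omega
  -- index 2 implies all squares are in `M`
  have hsq : ∀ x : Perm (Fin 5), x ^ 2 ∈ M := by
    intro x
    by_cases hx : x ∈ M
    · exact pow_mem hx 2
    by_contra hx2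
    have hQ : Nat.card (Perm (Fin 5) ⧸ M) = 2 := hidx
    letI : Fintype (Perm (Fin 5) ⧸ M) := Fintype.ofFinite _
    have hQ' : Fintype.card (Perm (Fin 5) ⧸ M) = 2 := by
      rw [← Nat.card_eq_fintype_card, hQ]
    have hlt : Fintype.card (Perm (Fin 5) ⧸ M) < Fintype.card (Fin 3) := by simp [hQ']
    obtain ⟨a, b, hab, heq⟩ := Fintype.exists_ne_map_eq_of_card_lt
      (![((1 : Perm (Fin 5)) : Perm (Fin 5) ⧸ M), (x : Perm (Fin 5) ⧸ M),
        ((x ^ 2 : Perm (Fin 5)) : Perm (Fin 5) ⧸ M)]) hlt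
    have key : ∀ u v : Perm (Fin 5),
        (u : Perm (Fin 5) ⧸ M) = (v : Perm (Fin 5) ⧸ M) ↔ u⁻¹ * v ∈ M :=
      fun u v => QuotientGroup.eq
    have hmx : ¬ ((1 : Perm (Fin 5)) : Perm (Fin 5) ⧸ M) = (x : Perm (Fin 5) ⧸ M) := by
      rw [key]; simpa using hx
    have hmx2 : ¬ ((1 : Perm (Fin 5)) : Perm (Fin 5) ⧸ M) = ((x ^ 2 : Perm (Fin 5)) : Perm (Fin 5) ⧸ M) := by
      rw [key]; simpa using hx2
    have hmxx2 : ¬ ((x : Perm (Fin 5)) : Perm (Fin 5) ⧸ M) = ((x ^ 2 : Perm (Fin 5)) : Perm (Fin 5) ⧸ M) := by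
      rw [key]
      intro hmem
      apply hx
      have : x⁻¹ * x ^ 2 = x := by group
      rwa [this] at hmem
    fin_cases a <;> fin_cases b <;>
      simp only [Matrix.cons_val_zero, Matrix.cons_val_one, Matrix.head_cons,
        Matrix.cons_val_two, Matrix.tail_cons] at heq <;>
      first
        | exact hab rfl
        | exact hmx heq
        | exact hmx2 heq
        | exact hmxx2 heq
        | exact hmx heq.symm
        | exact hmx2 heq.symm
        | exact hmxx2 heq.symm
  -- hence all three-cycles are in `M`
  have h3 : ∀ σ : Perm (Fin 5), σ.IsThreeCycle → σ ∈ M := by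
    intro σ hσ
    have ho : σ ^ 3 = 1 := by
      rw [← hσ.orderOf]; exact pow_orderOf_eq_one σ
    have : (σ ^ 2) ^ 2 = σ := by
      rw [← pow_mul]
      calc σ ^ 4 = σ ^ 3 * σ := by rw [pow_succ]
      _ = σ := by rw [ho, one_mul]
    exact this ▸ hsq (σ ^ 2)
  have hle : alternatingGroup (Fin 5) ≤ M := by
    rw [← Equiv.Perm.closure_three_cycles_eq_alternating]
    exact (Subgroup.closure_le M).mpr fun σ hσ => h3 σ hσ
  exact (Subgroup.eq_of_le_of_card_ge hle (by rw [hM, natCard_alt5])).symm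

/-- The stabilizer of a point inside the alternating group on five letters is
isomorphic to the alternating group on four letters. -/
private lemma stab_iso_A4 (i : Fin 5) :
    Nonempty (↥(alternatingGroup (Fin 5) ⊓ MulAction.stabilizer (Perm (Fin 5)) i) ≃*
      ↥(alternatingGroup (Fin 4))) := by
  classical
  set f : Fin 4 ≃ {x : Fin 5 // x ≠ i} := finSuccAboveEquiv i with hf
  set ψ : Perm (Fin 4) →* Perm (Fin 5) := Equiv.Perm.extendDomainHom f with hψ
  have hmemX : ∀ σ : ↥(alternatingGroup (Fin 4)),
      ψ (σ : Perm (Fin 4)) ∈ alternatingGroup (Fin 5) ⊓ MulAction.stabilizer (Perm (Fin 5)) i := by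
    intro σ
    rw [Subgroup.mem_inf]
    constructor
    · rw [Equiv.Perm.mem_alternatingGroup]
      show Equiv.Perm.sign ((σ : Perm (Fin 4)).extendDomain f) = 1
      rw [Equiv.Perm.sign_extendDomain]
      exact Equiv.Perm.mem_alternatingGroup.mp σ.2
    · rw [MulAction.mem_stabilizer_iff]
      show ψ (σ : Perm (Fin 4)) i = i
      exact Equiv.Perm.extendDomain_apply_not_subtype _ f (by simp)
  let χ : ↥(alternatingGroup (Fin 4)) →*
      ↥(alternatingGroup (Fin 5) ⊓ MulAction.stabilizer (Perm (Fin 5)) i) :=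
    { toFun := fun σ => ⟨ψ σ, hmemX σ⟩
      map_one' := by ext : 1; simp
      map_mul' := fun σ τ => by ext : 1; simp }
  have hinj : Function.Injective χ := by
    intro σ τ h
    have : ψ σ = ψ τ := congrArg Subtype.val h
    exact Subtype.ext (Equiv.Perm.extendDomainHom_injective f this)
  have hsurj : Function.Surjective χ := by
    rintro ⟨σ, hσmem⟩
    obtain ⟨hσA, hσi⟩ := Subgroup.mem_inf.mp hσmem
    rw [MulAction.mem_stabilizer_iff] at hσi
    have hσi' : σ i = i := hσi
    have hne : ∀ x : Fin 5, x ≠ i ↔ σ x ≠ i := by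
      intro x
      constructor
      · intro hx hxi; exact hx (σ.injective (by rw [hxi, hσi']))
      · intro hx hxi; exact hx (by rw [hxi, hσi'])
    set σ' : Perm {x : Fin 5 // x ≠ i} := σ.subtypePerm (fun x => (hne x).symm) with hσ'
    set τ : Perm (Fin 4) := f.symm.permCongr σ' with hτ
    have hext : (τ.extendDomain f) = σ := by
      ext x
      by_cases hx : x ≠ i
      · rw [Equiv.Perm.extendDomain_apply_subtype _ f hx]
        simp [hτ, Equiv.permCongr_apply, hσ']
      · push_neg at hx
        subst hx
        rw [Equiv.Perm.extendDomain_apply_not_subtype _ f (by simp)]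
        rw [hσi']
    have hτA : τ ∈ alternatingGroup (Fin 4) := by
      rw [Equiv.Perm.mem_alternatingGroup]
      have := Equiv.Perm.sign_extendDomain τ f
      rw [hext] at this
      rw [← this]
      exact Equiv.Perm.mem_alternatingGroup.mp hσA
    refine ⟨⟨τ, hτA⟩, ?_⟩
    ext : 1
    show ψ τ = σ
    simpa [hψ, Equiv.Perm.extendDomainHom] using hext
  exact ⟨(MulEquiv.ofBijective χ ⟨hinj, hsurj⟩).symm⟩

/-- Two subgroups of a group are conjugate if one is mapped onto the other by conjugation
by some group element. -/
def SubgroupIsConj {G : Type*} [Group G] (H K : Subgroup G) : Prop :=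
  ∃ g : G, Subgroup.map (MulAut.conj g).toMonoidHom H = K

/-- Two distinct conjugate `A₅`-subgroups of `A₆` intersect in a subgroup isomorphic to `A₄`
(in particular of order `12`). -/
theorem conjugate_A5_subgroups_of_A6_intersect_in_A4
    (H K : Subgroup ↥(alternatingGroup (Fin 6)))
    (hH : Nonempty (↥H ≃* ↥(alternatingGroup (Fin 5))))
    (hK : Nonempty (↥K ≃* ↥(alternatingGroup (Fin 5))))
    (hne : H ≠ K) (hconj : SubgroupIsConj H K) :
    Nonempty (↥(H ⊓ K) ≃* ↥(alternatingGroup (Fin 4))) ∧ Nat.card ↥(H ⊓ K) = 12 := by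
  classical
  obtain ⟨eH⟩ := hH
  obtain ⟨eK⟩ := hK
  obtain ⟨g, hg⟩ := hconj
  have hcardH : Nat.card ↥H = 60 := by rw [Nat.card_congr eH.toEquiv, natCard_alt5]
  have hcardK : Nat.card ↥K = 60 := by rw [Nat.card_congr eK.toEquiv, natCard_alt5]
  have hcardG : Nat.card ↥(alternatingGroup (Fin 6)) = 360 := natCard_alt6
  have hKidx : K.index = 6 := by
    have := Subgroup.card_mul_index K
    rw [hcardK, hcardG] at this
    omega
  -- the subgroup `H ∩ K` viewed inside `H`
  set S : Subgroup ↥H := K.subgroupOf H with hS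
  -- membership criterion from conjugacy
  have hconj_mem : ∀ x : ↥(alternatingGroup (Fin 6)), x ∈ H ↔ g * x * g⁻¹ ∈ K := by
    intro x
    rw [← hg]
    constructor
    · intro hx
      exact ⟨x, hx, by simp [MulAut.conj_apply]⟩
    · rintro ⟨y, hy, hyx⟩
      simp only [MulEquiv.toMonoidHom_eq_coe, MonoidHom.coe_coe, MulAut.conj_apply] at hyx
      have hy' : y = x := by
        have h1 : g * y = g * x := mul_right_cancel hyx
        exact mul_left_cancel h1
      rwa [← hy']
  have hconjK : ∀ k : ↥(alternatingGroup (Fin 6)), k ∈ K →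
      ∀ w : ↥(alternatingGroup (Fin 6)), (w ∈ K ↔ k⁻¹ * w * k ∈ K) := by
    intro k hk w
    constructor
    · intro hw
      exact mul_mem (mul_mem (inv_mem hk) hw) hk
    · intro hw
      have h2 := mul_mem (mul_mem hk hw) (inv_mem hk)
      have h3 : k * (k⁻¹ * w * k) * k⁻¹ = w := by group
      rwa [h3] at h2
  -- `H = K` whenever some `h ∈ H` satisfies `(h : G)⁻¹ * g⁻¹ ∈ K`
  have hHK_of : ∀ h : ↥H, ((h : ↥(alternatingGroup (Fin 6)))⁻¹ * g⁻¹ ∈ K) → H = K := by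
    intro h hk
    set hc : ↥(alternatingGroup (Fin 6)) := (h : ↥(alternatingGroup (Fin 6))) with hhc
    have key : ∀ x, x ∈ H ↔ hc⁻¹ * x * hc ∈ K := by
      intro x
      rw [hconj_mem x]
      have hid : g * x * g⁻¹ = (hc⁻¹ * g⁻¹)⁻¹ * (hc⁻¹ * x * hc) * (hc⁻¹ * g⁻¹) := by group
      rw [hid, ← hconjK _ hk (hc⁻¹ * x * hc)]
    apply le_antisymm
    · intro x hx
      have hy : hc * x * hc⁻¹ ∈ H := mul_mem (mul_mem h.2 hx) (inv_mem h.2)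
      have h2 := (key _).mp hy
      have h3 : hc⁻¹ * (hc * x * hc⁻¹) * hc = x := by group
      rwa [h3] at h2
    · intro x hx
      have hy : hc * x * hc⁻¹ ∈ H := by
        rw [key]
        have h3 : hc⁻¹ * (hc * x * hc⁻¹) * hc = x := by group
        rwa [h3]
      have h2 : hc⁻¹ * (hc * x * hc⁻¹) * hc ∈ H := mul_mem (mul_mem (inv_mem h.2) hy) h.2
      have h3 : hc⁻¹ * (hc * x * hc⁻¹) * hc = x := by group
      rwa [h3] at h2
  -- the injection `H ⧸ S ↪ G ⧸ K` avoiding the coset of `g⁻¹`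
  set j : (↥H ⧸ S) → (↥(alternatingGroup (Fin 6)) ⧸ K) := fun q =>
    Quotient.liftOn' q (fun h => ((h : ↥(alternatingGroup (Fin 6))) : ↥(alternatingGroup (Fin 6)) ⧸ K)) (by
      intro a b hab
      have hab' : a⁻¹ * b ∈ S := (QuotientGroup.leftRel_apply).mp hab
      apply QuotientGroup.eq.mpr
      simpa [hS, Subgroup.mem_subgroupOf] using hab') with hj
  have hj_mk : ∀ h : ↥H, j ((h : ↥H) : ↥H ⧸ S) = ((h : ↥(alternatingGroup (Fin 6))) : ↥(alternatingGroup (Fin 6)) ⧸ K) := fun _ => rfl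
  have hj_inj : Function.Injective j := by
    intro q1 q2
    induction q1 using QuotientGroup.induction_on with
    | H a =>
    induction q2 using QuotientGroup.induction_on with
    | H b =>
    intro hab
    rw [hj_mk, hj_mk] at hab
    have : (a : ↥(alternatingGroup (Fin 6)))⁻¹ * b ∈ K := QuotientGroup.eq.mp hab
    apply QuotientGroup.eq.mpr
    simpa [hS, Subgroup.mem_subgroupOf] using this
  have hj_not : ((g⁻¹ : ↥(alternatingGroup (Fin 6))) : ↥(alternatingGroup (Fin 6)) ⧸ K) ∉ Set.range j := by
    rintro ⟨q, hq⟩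
    induction q using QuotientGroup.induction_on with
    | H h =>
    rw [hj_mk] at hq
    have : (h : ↥(alternatingGroup (Fin 6)))⁻¹ * g⁻¹ ∈ K := QuotientGroup.eq.mp hq
    · exact hne (hHK_of h this)
  -- card bound: S.index < 6
  letI : Fintype (↥H ⧸ S) := Fintype.ofFinite _
  letI : Fintype (↥(alternatingGroup (Fin 6)) ⧸ K) := Fintype.ofFinite _
  have hcard_lt : Fintype.card (↥H ⧸ S) < Fintype.card (↥(alternatingGroup (Fin 6)) ⧸ K) :=
    Fintype.card_lt_of_injective_of_notMem j hj_inj hj_not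
  have hSidx_lt : S.index < 6 := by
    have h1 : S.index = Fintype.card (↥H ⧸ S) := by
      rw [Subgroup.index, Nat.card_eq_fintype_card]
    have h2 : K.index = Fintype.card (↥(alternatingGroup (Fin 6)) ⧸ K) := by
      rw [Subgroup.index, Nat.card_eq_fintype_card]
    omega
  -- S ≠ ⊤
  have hS_ne_top : S ≠ ⊤ := by
    intro htop
    have hle : H ≤ K := Subgroup.subgroupOf_eq_top.mp htop
    exact hne (Subgroup.eq_of_le_of_card_ge hle (by rw [hcardH, hcardK]))
  -- H is simple
  haveI : Nontrivial ↥H := eH.toEquiv.nontrivial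
  haveI : IsSimpleGroup ↥H :=
    IsSimpleGroup.isSimpleGroup_of_surjective eH.symm.toMonoidHom eH.symm.surjective
  -- the permutation action of H on H ⧸ S
  set φ : ↥H →* Perm (↥H ⧸ S) := MulAction.toPermHom ↥H (↥H ⧸ S) with hφ
  have hφ_inj : Function.Injective φ := by
    rcases Subgroup.Normal.eq_bot_or_eq_top (inferInstance : (MonoidHom.ker φ).Normal) with hk | hk
    · exact (MonoidHom.ker_eq_bot_iff φ).mp hk
    · exfalso
      apply hS_ne_top
      rw [← MulAction.stabilizer_quotient S]
      ext h
      simp only [Subgroup.mem_top, iff_true] at *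
      have : φ h = 1 := by
        have : h ∈ MonoidHom.ker φ := by rw [hk]; trivial
        exact this
      rw [MulAction.mem_stabilizer_iff]
      calc h • ((1 : ↥H) : ↥H ⧸ S) = (φ h) ((1 : ↥H) : ↥H ⧸ S) := rfl
      _ = _ := by rw [this]; rfl
  -- index computation: S.index = 5
  have hfree : 60 ≤ Nat.card (Perm (↥H ⧸ S)) := by
    rw [← hcardH]
    exact Nat.card_le_card_of_injective φ hφ_inj
  have hpermcard : Nat.card (Perm (↥H ⧸ S)) = Nat.factorial S.index := by
    have h1 : S.index = Fintype.card (↥H ⧸ S) := by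
      rw [Subgroup.index, Nat.card_eq_fintype_card]
    rw [Nat.card_eq_fintype_card, Fintype.card_perm, h1]
  have hSidx : S.index = 5 := by
    have h60 : 60 ≤ Nat.factorial S.index := by rw [← hpermcard]; exact hfree
    by_contra hne5
    have : S.index ≤ 4 := by omega
    have : Nat.factorial S.index ≤ 24 := by
      calc Nat.factorial S.index ≤ Nat.factorial 4 := Nat.factorial_le this
      _ = 24 := by decide
    omega
  have hcardS : Nat.card ↥S = 12 := by
    have := Subgroup.card_mul_index S
    rw [hSidx, hcardH] at this
    omega
  -- identify H ⧸ S with Fin 5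
  have hq5 : Fintype.card (↥H ⧸ S) = 5 := by
    rw [← Nat.card_eq_fintype_card, ← Subgroup.index, hSidx]
  set e5 : (↥H ⧸ S) ≃ Fin 5 := Fintype.equivFinOfCardEq hq5 with he5
  set φ' : ↥H →* Perm (Fin 5) := (permCongrMulEquiv e5).toMonoidHom.comp φ with hφ'
  have hφ'_inj : Function.Injective φ' := fun a b hab =>
    hφ_inj ((permCongrMulEquiv e5).injective hab)
  have hrange_card : Nat.card ↥(φ'.range) = 60 := by
    rw [← Nat.card_congr (MonoidHom.ofInjective hφ'_inj).toEquiv, hcardH]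
  have hrange : φ'.range = alternatingGroup (Fin 5) := subgroup_card_60 _ hrange_card
  set pt : Fin 5 := e5 ((1 : ↥H) : ↥H ⧸ S) with hpt
  -- S maps onto the stabilizer of pt inside A₅
  have hmapS : Subgroup.map φ' S
      = alternatingGroup (Fin 5) ⊓ MulAction.stabilizer (Perm (Fin 5)) pt := by
    have hsmem : ∀ s : ↥H, (s ∈ S ↔ s • ((1 : ↥H) : ↥H ⧸ S) = ((1 : ↥H) : ↥H ⧸ S)) := by
      intro s
      rw [← MulAction.mem_stabilizer_iff, MulAction.stabilizer_quotient S]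
    have happly : ∀ s : ↥H, φ' s pt = e5 (s • ((1 : ↥H) : ↥H ⧸ S)) := by
      intro s
      show (permCongrMulEquiv e5) (φ s) pt = _
      simp only [permCongrMulEquiv, MulEquiv.coe_mk, Equiv.permCongr_apply, hpt,
        Equiv.symm_apply_apply]
      rfl
    apply le_antisymm
    · rintro x ⟨s, hsS, rfl⟩
      have hsS' : s ∈ S := hsS
      refine Subgroup.mem_inf.mpr ⟨?_, ?_⟩
      · rw [← hrange]
        exact ⟨s, rfl⟩
      · rw [MulAction.mem_stabilizer_iff]
        show φ' s pt = pt
        rw [happly, (hsmem s).mp hsS']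
    · intro x hx
      obtain ⟨hxA, hxst⟩ := Subgroup.mem_inf.mp hx
      rw [← hrange] at hxA
      obtain ⟨s, rfl⟩ := hxA
      refine ⟨s, ?_, rfl⟩
      show s ∈ S
      rw [hsmem]
      have : φ' s pt = pt := hxst
      rw [happly] at this
      exact e5.injective this
  -- assemble the isomorphisms
  have hSeq : (H ⊓ K).subgroupOf H = S := by
    ext x
    simp [hS, Subgroup.mem_subgroupOf, x.2]
  have iso1 : ↥(H ⊓ K) ≃* ↥S :=
    ((Subgroup.subgroupOfEquivOfLe (inf_le_left : H ⊓ K ≤ H)).symm.trans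
      (MulEquiv.subgroupCongr hSeq))
  have iso2 : ↥S ≃* ↥(Subgroup.map φ' S) := Subgroup.equivMapOfInjective S φ' hφ'_inj
  obtain ⟨iso4⟩ := stab_iso_A4 pt
  have iso3 : ↥(Subgroup.map φ' S) ≃*
      ↥(alternatingGroup (Fin 5) ⊓ MulAction.stabilizer (Perm (Fin 5)) pt) :=
    MulEquiv.subgroupCongr hmapS
  refine ⟨⟨iso1.trans (iso2.trans (iso3.trans iso4))⟩, ?_⟩
  rw [Nat.card_congr iso1.toEquiv, hcardS]
end

section
/- There is no injective group homomorphism from the symmetric group S₅ into PGL(2,ℂ); equivalently, S₅ admits no faithful action by projective transformations on the complex projective line ℂP¹. -/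
open Matrix

noncomputable section

private abbrev G2 := Matrix.GeneralLinearGroup (Fin 2) ℂ


lemma sq2 (A : Matrix (Fin 2) (Fin 2) ℂ) :
    A ^ 2 = A.trace • A - A.det • (1 : Matrix (Fin 2) (Fin 2) ℂ) := by
  ext i j
  fin_cases i <;> fin_cases j <;>
    simp [pow_two, Matrix.mul_apply, Fin.sum_univ_two, Matrix.trace_fin_two,
      Matrix.det_fin_two, Matrix.one_apply] <;> ring

lemma pow5 (A : Matrix (Fin 2) (Fin 2) ℂ) :
    A ^ 5 = (A.trace^4 - 3*A.trace^2*A.det + A.det^2) • A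
      - (A.trace^3*A.det - 2*A.trace*A.det^2) • (1 : Matrix (Fin 2) (Fin 2) ℂ) := by
  ext i j
  fin_cases i <;> fin_cases j <;>
    simp [pow_succ, Matrix.mul_apply, Fin.sum_univ_two, Matrix.trace_fin_two,
      Matrix.det_fin_two, Matrix.one_apply] <;> ring

lemma trace_sq2 (A : Matrix (Fin 2) (Fin 2) ℂ) :
    (A ^ 2).trace = A.trace^2 - 2 * A.det := by
  rw [sq2]
  simp [Matrix.trace_smul, Matrix.trace_fin_two, Matrix.det_fin_two, smul_eq_mul]
  ring



def U01 : G2 :=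
  ⟨!![1, 1; 0, 1], !![1, -1; 0, 1],
   by ext i j; fin_cases i <;> fin_cases j <;>
        simp [Matrix.mul_apply, Fin.sum_univ_two, Matrix.one_apply],
   by ext i j; fin_cases i <;> fin_cases j <;>
        simp [Matrix.mul_apply, Fin.sum_univ_two, Matrix.one_apply]⟩

def U10 : G2 :=
  ⟨!![1, 0; 1, 1], !![1, 0; -1, 1],
   by ext i j; fin_cases i <;> fin_cases j <;>
        simp [Matrix.mul_apply, Fin.sum_univ_two, Matrix.one_apply],
   by ext i j; fin_cases i <;> fin_cases j <;>
        simp [Matrix.mul_apply, Fin.sum_univ_two, Matrix.one_apply]⟩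

lemma center_val {z : G2} (hz : z ∈ Subgroup.center G2) :
    (z : Matrix (Fin 2) (Fin 2) ℂ) = ((z : Matrix (Fin 2) (Fin 2) ℂ) 0 0) • 1 := by
  have h1 := congrArg Units.val (Subgroup.mem_center_iff.mp hz U01)
  have h2 := congrArg Units.val (Subgroup.mem_center_iff.mp hz U10)
  rw [Units.val_mul, Units.val_mul] at h1 h2
  have e10 : (z : Matrix (Fin 2) (Fin 2) ℂ) 1 0 = 0 := by
    have := congrFun (congrFun h1 0) 0
    simp [U01, Matrix.mul_apply, Fin.sum_univ_two] at this
    linear_combination this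
  have e01 : (z : Matrix (Fin 2) (Fin 2) ℂ) 0 1 = 0 := by
    have := congrFun (congrFun h2 1) 1
    simp [U10, Matrix.mul_apply, Fin.sum_univ_two] at this
    linear_combination this
  have e11 : (z : Matrix (Fin 2) (Fin 2) ℂ) 1 1 = (z : Matrix (Fin 2) (Fin 2) ℂ) 0 0 := by
    have := congrFun (congrFun h1 0) 1
    simp [U01, Matrix.mul_apply, Fin.sum_univ_two] at this
    linear_combination this
  ext i j
  fin_cases i <;> fin_cases j <;> simp [Matrix.one_apply, e10, e01, e11]

lemma scalar_mem_center (S : G2) (r : ℂ)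
    (h : (S : Matrix (Fin 2) (Fin 2) ℂ) = r • 1) : S ∈ Subgroup.center G2 := by
  rw [Subgroup.mem_center_iff]
  intro g
  ext
  rw [Units.val_mul, Units.val_mul, h, mul_smul_comm, smul_mul_assoc, mul_one, one_mul]

lemma key (a b : G2 ⧸ Subgroup.center G2) (ha : a ^ 5 = 1)
    (hab : b * a * b⁻¹ = a ^ 2) : a = 1 := by
  obtain ⟨S, rfl⟩ := QuotientGroup.mk_surjective a
  obtain ⟨T, rfl⟩ := QuotientGroup.mk_surjective b
  set M : Matrix (Fin 2) (Fin 2) ℂ := (S : Matrix (Fin 2) (Fin 2) ℂ) with hM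
  set p : ℂ := M.trace with hp
  set q : ℂ := M.det with hq
  -- q ≠ 0
  have hqne : q ≠ 0 := by
    have : IsUnit M := ⟨S, rfl⟩
    exact ((Matrix.isUnit_iff_isUnit_det M).mp this).ne_zero
  -- S^5 is central, hence scalar
  have h5 : S ^ 5 ∈ Subgroup.center G2 := by
    rw [← QuotientGroup.eq_one_iff]
    simpa using ha
  have h5v : M ^ 5 = (((S ^ 5 : G2) : Matrix (Fin 2) (Fin 2) ℂ) 0 0) • 1 := by
    have := center_val h5
    rwa [Units.val_pow_eq_pow_val] at this
  set d : ℂ := ((S ^ 5 : G2) : Matrix (Fin 2) (Fin 2) ℂ) 0 0 with hd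
  -- the conjugation relation gives a scalar c with M^2 = c • (T M T⁻¹)
  have hw : (T * S * T⁻¹)⁻¹ * S ^ 2 ∈ Subgroup.center G2 := by
    rw [← QuotientGroup.eq]
    simpa using hab
  set c : ℂ := (((T * S * T⁻¹)⁻¹ * S ^ 2 : G2) : Matrix (Fin 2) (Fin 2) ℂ) 0 0 with hc
  have hwv := center_val hw
  have hMsq : M ^ 2 = c • (((T : Matrix (Fin 2) (Fin 2) ℂ)) * M * ((T⁻¹ : G2) : Matrix (Fin 2) (Fin 2) ℂ)) := by
    have h1 : ((T * S * T⁻¹ : G2) : Matrix (Fin 2) (Fin 2) ℂ) * (((T * S * T⁻¹)⁻¹ * S ^ 2 : G2) : Matrix (Fin 2) (Fin 2) ℂ)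
        = M ^ 2 := by
      rw [← Units.val_mul, mul_inv_cancel_left, Units.val_pow_eq_pow_val]
    rw [hwv, mul_smul_comm, mul_one] at h1
    rw [← h1, ← hc]
    rw [Units.val_mul, Units.val_mul]
  -- trace equation
  have htr : p ^ 2 - 2 * q = c * p := by
    have := congrArg Matrix.trace hMsq
    rw [trace_sq2, Matrix.trace_smul] at this
    have htc : ((T : Matrix (Fin 2) (Fin 2) ℂ) * M * ((T⁻¹ : G2) : Matrix (Fin 2) (Fin 2) ℂ)).trace = p := by
      rw [Matrix.trace_mul_comm, ← Matrix.mul_assoc]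
      have : ((T⁻¹ : G2) : Matrix (Fin 2) (Fin 2) ℂ) * (T : Matrix (Fin 2) (Fin 2) ℂ) = 1 := by
        rw [← Units.val_mul, inv_mul_cancel, Units.val_one]
      rw [this, Matrix.one_mul]
    rw [htc, smul_eq_mul] at this
    exact this
  -- det equation
  have hdet : q = c ^ 2 := by
    have := congrArg Matrix.det hMsq
    rw [Matrix.det_pow, Matrix.det_smul, Matrix.det_mul, Matrix.det_mul] at this
    have hdt : (T : Matrix (Fin 2) (Fin 2) ℂ).det * ((T⁻¹ : G2) : Matrix (Fin 2) (Fin 2) ℂ).det = 1 := by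
      rw [← Matrix.det_mul, ← Units.val_mul, mul_inv_cancel, Units.val_one, Matrix.det_one]
    have hcard : Fintype.card (Fin 2) = 2 := by simp
    rw [hcard, ← hq] at this
    have hqq : q * q = c ^ 2 * q := by linear_combination this + c ^ 2 * q * hdt
    exact mul_right_cancel₀ hqne hqq
  -- case split on the coefficient of M in M^5
  by_cases hA : p ^ 4 - 3 * p ^ 2 * q + q ^ 2 = 0
  · -- contradiction from the three equations
    exfalso
    have h2 : (p ^ 2 - 2 * q) ^ 2 = q * p ^ 2 := by
      rw [htr, hdet]; ring
    have hq3 : q ^ 3 = 0 := by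
      linear_combination ((2*p^2 - 7*q)/5) * hA + ((3*q - 2*p^2)/5) * h2
    exact hqne (pow_eq_zero_iff (by norm_num)|>.mp hq3)
  · -- M is scalar, so S is central and a = 1
    have h5' := pow5 M
    rw [h5v, ← hp, ← hq] at h5'
    have hMs : (p ^ 4 - 3 * p ^ 2 * q + q ^ 2) • M
        = (d + (p^3*q - 2*p*q^2)) • (1 : Matrix (Fin 2) (Fin 2) ℂ) := by
      rw [add_smul]
      linear_combination (norm := module) h5'.symm
    have : M = ((p ^ 4 - 3 * p ^ 2 * q + q ^ 2)⁻¹ * (d + (p^3*q - 2*p*q^2))) • 1 := by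
      calc M = (p ^ 4 - 3 * p ^ 2 * q + q ^ 2)⁻¹ • ((p ^ 4 - 3 * p ^ 2 * q + q ^ 2) • M) :=
            (inv_smul_smul₀ hA M).symm
        _ = _ := by rw [hMs, smul_smul]
    rw [QuotientGroup.eq_one_iff]
    exact scalar_mem_center S _ this

/-- There is no injective group homomorphism from `S₅` into
`PGL(2,ℂ) = GL(2,ℂ)/center`; i.e. `S₅` has no faithful action by projective
transformations on `ℂP¹`. -/
theorem S5_does_not_embed_in_PGL2C :
    ¬ ∃ φ : Equiv.Perm (Fin 5) →*
        (Matrix.GeneralLinearGroup (Fin 2) ℂ ⧸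
          Subgroup.center (Matrix.GeneralLinearGroup (Fin 2) ℂ)),
      Function.Injective φ := by
  rintro ⟨φ, hφ⟩
  set s : Equiv.Perm (Fin 5) := c[0, 1, 2, 3, 4] with hs
  set t : Equiv.Perm (Fin 5) := c[1, 2, 4, 3] with ht
  have hs5 : s ^ 5 = 1 := by set_option maxRecDepth 10000 in decide
  have hsne : s ≠ 1 := by decide
  have hrel : t * s * t⁻¹ = s ^ 2 := by decide
  have ha : (φ s) ^ 5 = 1 := by rw [← _root_.map_pow, hs5, _root_.map_one]
  have hab : φ t * φ s * (φ t)⁻¹ = (φ s) ^ 2 := by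
    rw [← _root_.map_inv, ← _root_.map_mul, ← _root_.map_mul, hrel, _root_.map_pow]
  have h1 : φ s = 1 := key (φ s) (φ t) ha hab
  exact hsne (hφ (h1.trans (_root_.map_one φ).symm))

end
end
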